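/- arXiv:2401.09216 — 3 statements merged into one kernel-verified Lean document; each statement's English description precedes it below -/
import Mathlib

section
/- Domination of higher-order trace terms by the first: let B be an n×n max-plus matrix, p, q nonzero vectors with q⁻p finite, and define F_k = ⊕_{0 ≤ i_1+⋯+i_k ≤ n−k} (pq⁻)B^{i_1}⋯(pq⁻)B^{i_k} for k = 1,…,n. Then ⊕_{k=1}^n tr^{1/k}(F_k) = tr F_1 = q⁻ B* p, where B* = I ⊕ B ⊕ ⋯ ⊕ B^{n−1} is the Kleene star (assuming Tr(B) ≤ 0 so B* is defined). -/
noncomputable section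
abbrev T := WithBot ℝ

/-- Tropical (max-plus) sum over a finite family. -/
def tSum {n : ℕ} (f : Fin n → T) : T := Finset.univ.sup f

/-- Tropical matrix product. -/
def tMulM {m n p : ℕ} (A : Matrix (Fin m) (Fin n) T) (B : Matrix (Fin n) (Fin p) T) :
    Matrix (Fin m) (Fin p) T := fun i j => tSum fun k => A i k + B k j

/-- Tropical identity matrix. -/
def tId (n : ℕ) : Matrix (Fin n) (Fin n) T := fun i j => if i = j then (0 : T) else ⊥

/-- Tropical matrix power. -/
def tpow {n : ℕ} (A : Matrix (Fin n) (Fin n) T) : ℕ → Matrix (Fin n) (Fin n) T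
  | 0 => tId n
  | k + 1 => tMulM (tpow A k) A

/-- Tropical trace. -/
def tTr {n : ℕ} (A : Matrix (Fin n) (Fin n) T) : T := tSum fun k => A k k

/-- Multiplicative conjugate of a scalar: negation on finite entries, -∞ ↦ -∞. -/
def tconj (t : T) : T := WithBot.map (fun a : ℝ => -a) t

/-- Kleene star (for an n×n matrix): I ⊕ A ⊕ ⋯ ⊕ A^(n-1). -/
def kstar {n : ℕ} (A : Matrix (Fin n) (Fin n) T) : Matrix (Fin n) (Fin n) T :=
  fun i j => tSum fun k : Fin n => tpow A (k : ℕ) i j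

/-- Tr(A) = tr A ⊕ ⋯ ⊕ tr Aⁿ. -/
def TrB {n : ℕ} (A : Matrix (Fin n) (Fin n) T) : T := tSum fun k : Fin n => tTr (tpow A ((k : ℕ) + 1))

/-- Tropical root: t^{1/k} = t/k. -/
def tdiv (t : T) (k : ℕ) : T := WithBot.map (fun a : ℝ => a / k) t

/-- Row vector × matrix × column vector. -/
def vMv {n : ℕ} (u : Fin n → T) (A : Matrix (Fin n) (Fin n) T) (v : Fin n → T) : T :=
  tSum fun i => u i + tSum fun j => A i j + v j

/-- The rank-one matrix p q⁻. -/
def pqm {n : ℕ} (p q : Fin n → T) : Matrix (Fin n) (Fin n) T := fun i j => p i + tconj (q j)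

/-- The product M B^{i₁} ⋯ M B^{i_k} for exponents given by v. -/
def chain {n : ℕ} (B M : Matrix (Fin n) (Fin n) T) :
    (k : ℕ) → (Fin k → ℕ) → Matrix (Fin n) (Fin n) T
  | 0, _ => tId n
  | k + 1, v => tMulM (tMulM M (tpow B (v 0))) (chain B M k (fun i => v i.succ))

/-- F_k = ⊕_{0 ≤ i₁+⋯+i_k ≤ n−k} (p q⁻) B^{i₁} ⋯ (p q⁻) B^{i_k}. -/
def Fmat {n : ℕ} (B : Matrix (Fin n) (Fin n) T) (p q : Fin n → T) (k : ℕ) :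
    Matrix (Fin n) (Fin n) T := fun i j =>
  (Finset.univ.filter (fun v : Fin k → Fin n => (∑ l, ((v l : ℕ))) + k ≤ n)).sup
    (fun v => chain B (pqm p q) k (fun l => (v l : ℕ)) i j)

namespace TropAux

lemma le_tSum {m : ℕ} (f : Fin m → T) (i : Fin m) : f i ≤ tSum f :=
  Finset.le_sup (Finset.mem_univ i)

lemma tSum_le {m : ℕ} {f : Fin m → T} {c : T} (h : ∀ i, f i ≤ c) : tSum f ≤ c :=
  Finset.sup_le fun i _ => h i

lemma add_sup_distrib (a : T) : ∀ x y : T, a + (x ⊔ y) = (a + x) ⊔ (a + y) := by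
  intro x y
  rcases le_total x y with h | h
  · rw [sup_eq_right.2 h, sup_eq_right.2 (by gcongr : a + x ≤ a + y)]
  · rw [sup_eq_left.2 h, sup_eq_left.2 (by gcongr : a + y ≤ a + x)]

lemma add_finsup {α : Type*} (a : T) (s : Finset α) (f : α → T) :
    a + s.sup f = s.sup fun i => a + f i :=
  Finset.comp_sup_eq_sup_comp (a + ·) (add_sup_distrib a) (WithBot.add_bot a)

lemma add_tSum (a : T) {m : ℕ} (f : Fin m → T) :
    a + tSum f = tSum fun i => a + f i :=
  add_finsup a Finset.univ f

lemma tSum_add (a : T) {m : ℕ} (f : Fin m → T) :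
    tSum f + a = tSum fun i => f i + a := by
  rw [add_comm, add_tSum]
  exact Finset.sup_congr rfl fun i _ => add_comm a (f i)

lemma tMulM_apply {m k p : ℕ} (A : Matrix (Fin m) (Fin k) T) (C : Matrix (Fin k) (Fin p) T)
    (i : Fin m) (j : Fin p) : tMulM A C i j = tSum fun l => A i l + C l j := rfl

lemma tMulM_tId {m : ℕ} (A : Matrix (Fin m) (Fin m) T) : tMulM A (tId m) = A := by
  funext i j
  apply le_antisymm
  · refine tSum_le fun l => ?_
    by_cases h : l = j
    · subst h; simp [tId]
    · simp [tId, h]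
  · have := le_tSum (fun l => A i l + tId m l j) j
    simpa [tId, tMulM_apply] using this

variable {n : ℕ} (B : Matrix (Fin n) (Fin n) T) (p q : Fin n → T)

/-- row vector q⁻ B^a at entry j -/
def w (a : ℕ) (j : Fin n) : T := tSum fun l => tconj (q l) + tpow B a l j

/-- scalar q⁻ B^a p -/
def sS (a : ℕ) : T := tSum fun j => w B q a j + p j

lemma pq_mul (A : Matrix (Fin n) (Fin n) T) (i j : Fin n) :
    tMulM (pqm p q) A i j = p i + tSum fun l => tconj (q l) + A l j := by
  rw [tMulM_apply]
  rw [show (fun l => pqm p q i l + A l j) = fun l => p i + (tconj (q l) + A l j) from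
    funext fun l => add_assoc _ _ _]
  rw [add_tSum]

lemma chain_entry (k : ℕ) (v : Fin (k + 1) → ℕ) (i j : Fin n) :
    chain B (pqm p q) (k + 1) v i j
      = p i + (∑ l : Fin k, sS B p q (v l.castSucc)) + w B q (v (Fin.last k)) j := by
  induction k generalizing i j with
  | zero =>
      have h0 : chain B (pqm p q) 1 v = tMulM (pqm p q) (tpow B (v 0)) := by
        show tMulM (tMulM (pqm p q) (tpow B (v 0))) (chain B (pqm p q) 0 fun i => v i.succ)
          = _
        show tMulM _ (tId n) = _
        rw [tMulM_tId]
      rw [h0, pq_mul]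
      have hv : v (Fin.last 0) = v 0 := congrArg v (by omega)
      rw [hv]
      simp only [Finset.univ_eq_empty, Finset.sum_empty, add_zero]
      rfl
  | succ k ih =>
      have h0 : chain B (pqm p q) (k + 1 + 1) v
          = tMulM (tMulM (pqm p q) (tpow B (v 0)))
              (chain B (pqm p q) (k + 1) fun i => v i.succ) := rfl
      rw [h0, tMulM_apply]
      set C : T := (p i + ((∑ t : Fin k, sS B p q (v (t.castSucc.succ)))
          + w B q (v (Fin.last (k + 1))) j)) with hC
      have h1 : (fun l => tMulM (pqm p q) (tpow B (v 0)) i l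
            + chain B (pqm p q) (k + 1) (fun i => v i.succ) l j)
          = fun l => C + (w B q (v 0) l + p l) := by
        funext l
        rw [pq_mul, ih]
        show p i + w B q (v 0) l
            + (p l + (∑ t : Fin k, sS B p q (v (t.castSucc.succ)))
              + w B q (v ((Fin.last k).succ)) j) = _
        rw [Fin.succ_last, hC]
        abel
      rw [h1, ← add_tSum C (fun l => w B q (v 0) l + p l)]
      have h2 : tSum (fun l => w B q (v 0) l + p l) = sS B p q (v 0) := rfl
      rw [h2, hC]
      rw [Fin.sum_univ_succ (f := fun l : Fin (k + 1) => sS B p q (v l.castSucc))]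
      simp only [Fin.castSucc_zero, Fin.succ_castSucc]
      abel

lemma tTr_chain (k : ℕ) (v : Fin (k + 1) → ℕ) :
    tTr (chain B (pqm p q) (k + 1) v) = ∑ l : Fin (k + 1), sS B p q (v l) := by
  unfold tTr
  have h1 : (fun i => chain B (pqm p q) (k + 1) v i i)
      = fun i => (∑ l : Fin k, sS B p q (v l.castSucc))
          + (w B q (v (Fin.last k)) i + p i) := by
    funext i; rw [chain_entry]; abel
  rw [h1, ← add_tSum]
  have h2 : tSum (fun i => w B q (v (Fin.last k)) i + p i) = sS B p q (v (Fin.last k)) := rfl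
  rw [h2, Fin.sum_univ_castSucc (f := fun l : Fin (k + 1) => sS B p q (v l))]

lemma tTr_Fmat (k : ℕ) :
    tTr (Fmat B p q k)
      = (Finset.univ.filter (fun v : Fin k → Fin n => (∑ l, ((v l : ℕ))) + k ≤ n)).sup
          (fun v => tTr (chain B (pqm p q) k (fun l => (v l : ℕ)))) := by
  unfold tTr tSum Fmat
  exact Finset.sup_comm _ _ _

lemma c_eq (hn : 0 < n) :
    tTr (Fmat B p q 1) = tSum fun m : Fin n => sS B p q (m : ℕ) := by
  rw [tTr_Fmat]
  have hfil : (Finset.univ.filter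
        (fun v : Fin 1 → Fin n => (∑ l, ((v l : ℕ))) + 1 ≤ n)) = Finset.univ := by
    refine Finset.filter_true_of_mem fun v _ => ?_
    rw [Fin.sum_univ_one]
    exact (v 0).isLt
  rw [hfil]
  apply le_antisymm
  · refine Finset.sup_le fun v _ => ?_
    calc tTr (chain B (pqm p q) 1 fun l => ((v l : ℕ)))
        = ∑ l : Fin 1, sS B p q ((v l : ℕ)) := tTr_chain B p q 0 _
      _ = sS B p q ((v 0 : ℕ)) := Fin.sum_univ_one _
      _ ≤ _ := le_tSum (fun m : Fin n => sS B p q (m : ℕ)) (v 0)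
  · refine tSum_le fun m => ?_
    refine le_trans ?_ (Finset.le_sup (f := fun v : Fin 1 → Fin n =>
      tTr (chain B (pqm p q) 1 (fun l => ((v l : ℕ))))) (Finset.mem_univ fun _ => m))
    calc sS B p q (m : ℕ) = ∑ _l : Fin 1, sS B p q (m : ℕ) := (Fin.sum_univ_one fun _ : Fin 1 => sS B p q (m : ℕ)).symm
      _ = tTr (chain B (pqm p q) 1 fun _ => (m : ℕ)) := (tTr_chain B p q 0 _).symm
      _ ≤ _ := le_refl _

lemma trF_le (hn : 0 < n) (k : ℕ) :
    tTr (Fmat B p q (k + 1)) ≤ (k + 1) • tTr (Fmat B p q 1) := by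
  rw [tTr_Fmat]
  refine Finset.sup_le fun v _ => ?_
  rw [tTr_chain]
  calc ∑ l : Fin (k + 1), sS B p q ((v l : ℕ))
      ≤ ∑ _l : Fin (k + 1), tTr (Fmat B p q 1) := by
        refine Finset.sum_le_sum fun l _ => ?_
        rw [c_eq B p q hn]
        exact le_tSum (fun m : Fin n => sS B p q (m : ℕ)) (v l)
    _ = (k + 1) • tTr (Fmat B p q 1) := by
        rw [Finset.sum_const, Finset.card_univ, Fintype.card_fin]

lemma nsmul_coe (m : ℕ) (x : ℝ) : m • ((x : ℝ) : T) = (((m : ℝ) * x : ℝ) : T) := by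
  induction m with
  | zero => simp
  | succ m ih =>
      rw [succ_nsmul, ih, ← WithBot.coe_add]
      congr 1
      push_cast
      ring

lemma nsmul_bot (m : ℕ) : (m + 1) • (⊥ : T) = ⊥ := by
  rw [succ_nsmul, WithBot.add_bot]

lemma tdiv_le {t c : T} (m : ℕ) (h : t ≤ (m + 1) • c) : tdiv t (m + 1) ≤ c := by
  induction t using WithBot.recBotCoe with
  | bot => exact bot_le
  | coe x =>
    induction c using WithBot.recBotCoe with
    | bot =>
        rw [nsmul_bot] at h
        exact absurd (le_bot_iff.mp h) (by simp)
    | coe y =>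
        rw [nsmul_coe] at h
        rw [WithBot.coe_le_coe] at h
        show ((x / ((m + 1 : ℕ) : ℝ) : ℝ) : T) ≤ (y : T)
        rw [WithBot.coe_le_coe, div_le_iff₀ (by positivity)]
        calc x ≤ ((m + 1 : ℕ) : ℝ) * y := by push_cast at h ⊢; linarith
          _ = y * ((m + 1 : ℕ) : ℝ) := mul_comm _ _

lemma tdiv_one (t : T) : tdiv t 1 = t := by
  induction t using WithBot.recBotCoe with
  | bot => rfl
  | coe x =>
      show ((x / ((1 : ℕ) : ℝ) : ℝ) : T) = _
      norm_num

lemma le_tSum3 (f : Fin n → Fin n → Fin n → T) (a b d : Fin n) :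
    f a b d ≤ tSum fun x => tSum fun y => tSum fun z => f x y z :=
  le_trans (le_trans (le_tSum (fun z => f a b z) d)
    (le_tSum (fun y => tSum fun z => f a y z) b))
    (le_tSum (fun x => tSum fun y => tSum fun z => f x y z) a)

lemma triple_swap (g : Fin n → Fin n → Fin n → T) :
    (tSum fun m => tSum fun j => tSum fun l => g m j l)
      = tSum fun l => tSum fun j => tSum fun m => g m j l := by
  apply le_antisymm
  · exact tSum_le fun m => tSum_le fun j => tSum_le fun l =>
      le_tSum3 (fun l j m => g m j l) l j m
  · exact tSum_le fun l => tSum_le fun j => tSum_le fun m =>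
      le_tSum3 (fun m j l => g m j l) m j l

lemma sS_eq (a : ℕ) :
    sS B p q a = tSum fun j => tSum fun l => tconj (q l) + (tpow B a l j + p j) := by
  unfold sS
  congr 1; funext j
  unfold w
  rw [tSum_add]
  congr 1; funext l
  rw [add_assoc]

lemma vMv_eq :
    vMv (fun i => tconj (q i)) (kstar B) p
      = tSum fun l => tSum fun j => tSum fun m : Fin n =>
          tconj (q l) + (tpow B (m : ℕ) l j + p j) := by
  unfold vMv
  congr 1; funext l
  rw [show (fun j => kstar B l j + p j)
      = fun j => tSum fun m : Fin n => tpow B (m : ℕ) l j + p j from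
    funext fun j => tSum_add (p j) (fun m : Fin n => tpow B (m : ℕ) l j)]
  rw [add_tSum]
  congr 1; funext j
  rw [add_tSum]

end TropAux

open TropAux in
/-- Domination of higher-order trace terms by the first:
⊕_{k=1}^n tr^{1/k}(F_k) = tr F₁ = q⁻ B* p. -/
theorem tropical_trace_terms_dominated {n : ℕ} (B : Matrix (Fin n) (Fin n) T)
    (p q : Fin n → T) (hp : ∃ i, p i ≠ ⊥) (hq : ∃ i, q i ≠ ⊥)
    (hqp : tSum (fun i => tconj (q i) + p i) ≠ ⊥)
    (hTr : TrB B ≤ 0) :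
    tSum (fun k : Fin n => tdiv (tTr (Fmat B p q ((k : ℕ) + 1))) ((k : ℕ) + 1)) =
        tTr (Fmat B p q 1) ∧
      tTr (Fmat B p q 1) = vMv (fun i => tconj (q i)) (kstar B) p := by
  obtain ⟨i0, _⟩ := hp
  have hn : 0 < n := i0.pos
  constructor
  · apply le_antisymm
    · exact tSum_le fun k => tdiv_le (k : ℕ) (trF_le B p q hn (k : ℕ))
    · have h0 := le_tSum
        (fun k : Fin n => tdiv (tTr (Fmat B p q ((k : ℕ) + 1))) ((k : ℕ) + 1)) ⟨0, hn⟩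
      simpa [tdiv_one] using h0
  · rw [c_eq B p q hn, vMv_eq B p q]
    rw [show (fun m : Fin n => sS B p q (m : ℕ))
        = fun m : Fin n => tSum fun j => tSum fun l =>
            tconj (q l) + (tpow B (m : ℕ) l j + p j) from
      funext fun m => sS_eq B p q (m : ℕ)]
    exact triple_swap fun m j l => tconj (q l) + (tpow B (m : ℕ) l j + p j)
end
end

section
/- Let B ∈ (ℝ ∪ {-∞})^{n×n} with Tr(B) ≤ 0 (tropical one), let p, q be nonzero vectors with θ ≥ q⁻ B^i p for all 0 ≤ i ≤ n−1 where θ is a finite scalar. Then for every k ≥ 2 and indices i_0, i_1, …, i_k ≥ 0, θ^{−k} ⊗ (q⁻B^{i_1}p ⋯ q⁻B^{i_{k−1}}p) ⊗ B^{i_0} p q⁻ B^{i_k} ≤ θ^{−1} ⊗ B^{i_0} p q⁻ B^{i_k} entrywise. -/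
noncomputable section
/-- The scalar q⁻ B^m p. -/
def sclr {n : ℕ} (B : Matrix (Fin n) (Fin n) T) (p q : Fin n → T) (m : ℕ) : T :=
  vMv (fun i => tconj (q i)) (tpow B m) p

/-! Auxiliary development -/

/-- Walk weight. -/
def Wt {n : ℕ} (B : Matrix (Fin n) (Fin n) T) (m : ℕ) (w : ℕ → Fin n) : T :=
  ∑ t ∈ Finset.range m, B (w t) (w (t + 1))

lemma le_tSum {n : ℕ} (f : Fin n → T) (j : Fin n) : f j ≤ tSum f :=
  Finset.le_sup (Finset.mem_univ j)

lemma tSum_attained {n : ℕ} (hn : 0 < n) (f : Fin n → T) : ∃ j, tSum f = f j := by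
  obtain ⟨j, _, hj⟩ := Finset.exists_mem_eq_sup (Finset.univ : Finset (Fin n))
    (Finset.univ_nonempty_iff.2 ⟨⟨0, hn⟩⟩) f
  exact ⟨j, hj⟩

lemma Wt_le_pow {n : ℕ} (B : Matrix (Fin n) (Fin n) T) (m : ℕ) (w : ℕ → Fin n) :
    Wt B m w ≤ tpow B m (w 0) (w m) := by
  induction m with
  | zero => simp [Wt, tpow, tId]
  | succ m ih =>
    rw [Wt, Finset.sum_range_succ]
    have h2 : tpow B m (w 0) (w m) + B (w m) (w (m + 1)) ≤ tpow B (m + 1) (w 0) (w (m + 1)) :=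
      le_tSum (fun k => tpow B m (w 0) k + B k (w (m + 1))) (w m)
    exact le_trans (add_le_add_left ih _) h2

lemma Wt_congr {n : ℕ} (B : Matrix (Fin n) (Fin n) T) (m : ℕ) {w w' : ℕ → Fin n}
    (h : ∀ t ≤ m, w t = w' t) : Wt B m w = Wt B m w' := by
  unfold Wt
  refine Finset.sum_congr rfl fun t ht => ?_
  rw [Finset.mem_range] at ht
  rw [h t (by omega), h (t + 1) (by omega)]

lemma pow_le_Wt {n : ℕ} (hn : 0 < n) (B : Matrix (Fin n) (Fin n) T) (m : ℕ) (i j : Fin n) :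
    tpow B m i j = ⊥ ∨ ∃ w : ℕ → Fin n, w 0 = i ∧ w m = j ∧ tpow B m i j ≤ Wt B m w := by
  induction m generalizing j with
  | zero =>
    by_cases h : i = j
    · exact Or.inr ⟨fun _ => i, rfl, h ▸ rfl, by simp [Wt, tpow, tId, h]⟩
    · exact Or.inl (by simp [tpow, tId, h])
  | succ m ih =>
    have hEq : tpow B (m + 1) i j = tSum fun k => tpow B m i k + B k j := rfl
    obtain ⟨k0, hk0⟩ := tSum_attained hn (fun k => tpow B m i k + B k j)
    rcases ih k0 with hbot | ⟨w, hw0, hwm, hw⟩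
    · exact Or.inl (by rw [hEq, hk0, hbot, WithBot.bot_add])
    · refine Or.inr ⟨fun t => if t ≤ m then w t else j, by simp [hw0], by simp, ?_⟩
      have h1 : Wt B (m + 1) (fun t => if t ≤ m then w t else j)
          = Wt B m (fun t => if t ≤ m then w t else j) + B (w m) j := by
        rw [Wt, Finset.sum_range_succ]; simp [Wt]
      have h2 : Wt B m (fun t => if t ≤ m then w t else j) = Wt B m w :=
        Wt_congr B m (fun t ht => by simp [ht])
      rw [hEq, hk0, h1, h2]
      exact add_le_add hw (le_of_eq (by rw [hwm]))

lemma tpow_le_kstar {n : ℕ} (hn : 0 < n) (B : Matrix (Fin n) (Fin n) T) (hTr : TrB B ≤ 0) :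
    ∀ m (i j : Fin n), tpow B m i j ≤ kstar B i j := by
  intro m
  induction m using Nat.strong_induction_on with
  | _ m ih =>
  intro i j
  by_cases hm : m < n
  · exact le_tSum (fun c : Fin n => tpow B (c : ℕ) i j) ⟨m, hm⟩
  push_neg at hm
  rcases pow_le_Wt hn B m i j with hbot | ⟨w, hw0, hwm, hw⟩
  · simp [hbot]
  -- pigeonhole: two equal vertices among w 0, ..., w n
  have hni : ¬ Function.Injective (fun t : Fin (n + 1) => w t) := by
    intro hinj
    have := Fintype.card_le_of_injective _ hinj
    simp at this
  rw [Function.not_injective_iff] at hni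
  obtain ⟨s', t', hst, hne⟩ := hni
  -- normalize to naturals s < t
  obtain ⟨s, t, hlt, htn, hws⟩ :
      ∃ s t : ℕ, s < t ∧ t ≤ n ∧ w s = w t := by
    rcases lt_or_gt_of_ne hne with h | h
    · exact ⟨s', t', h, Nat.lt_succ_iff.1 t'.isLt, hst⟩
    · exact ⟨t', s', h, Nat.lt_succ_iff.1 s'.isLt, hst.symm⟩
  set c := t - s with hc
  have hc1 : 1 ≤ c := by omega
  have hcm : c ≤ m := by omega
  have hsc : s + c = t := by omega
  -- cycle weight is ≤ 0
  have hcyc : (∑ r ∈ Finset.range c, B (w (s + r)) (w (s + r + 1))) ≤ 0 := by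
    have h1 : (∑ r ∈ Finset.range c, B (w (s + r)) (w (s + r + 1)))
        = Wt B c (fun r => w (s + r)) := by
      unfold Wt
      refine Finset.sum_congr rfl fun r _ => by ring_nf
    have h2 : Wt B c (fun r => w (s + r)) ≤ tpow B c (w s) (w s) := by
      have := Wt_le_pow B c (fun r => w (s + r))
      simpa [hsc, ← hws] using this
    have h3 : tpow B c (w s) (w s) ≤ tTr (tpow B c) :=
      le_tSum (fun k => tpow B c k k) (w s)
    have h4 : tTr (tpow B c) ≤ TrB B := by
      have hcn : c - 1 < n := by omega
      have : tTr (tpow B ((c - 1 : ℕ) + 1)) ≤ TrB B :=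
        le_tSum (fun k : Fin n => tTr (tpow B ((k : ℕ) + 1))) ⟨c - 1, hcn⟩
      simpa [Nat.sub_add_cancel hc1] using this
    calc _ = Wt B c (fun r => w (s + r)) := h1
      _ ≤ tTr (tpow B c) := le_trans h2 h3
      _ ≤ 0 := le_trans h4 hTr
  -- the shortened walk
  set w'' : ℕ → Fin n := fun r => if r ≤ s then w r else w (r + c) with hw''
  have hsm : s ≤ m - c := by omega
  have hsplit : Wt B m w = (∑ r ∈ Finset.range c, B (w (s + r)) (w (s + r + 1)))
      + Wt B (m - c) w'' := by
    have hterm : ∀ r, B (w'' r) (w'' (r + 1))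
        = if r < s then B (w r) (w (r + 1)) else B (w (r + c)) (w (r + c + 1)) := by
      intro r
      rcases lt_trichotomy r s with hr | hr | hr
      · rw [if_pos hr]
        simp only [hw'', if_pos hr.le, if_pos (Nat.succ_le_of_lt hr)]
      · subst hr
        rw [if_neg (lt_irrefl r)]
        simp only [hw'', if_pos (le_refl r), if_neg (by omega : ¬ r + 1 ≤ r)]
        have h1 : w (r + c) = w r := by rw [hsc, ← hws]
        rw [show r + 1 + c = r + c + 1 by omega, h1]
      · rw [if_neg (by omega)]
        simp only [hw'', if_neg (by omega : ¬ r ≤ s), if_neg (by omega : ¬ r + 1 ≤ s)]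
        rw [show r + 1 + c = r + c + 1 by omega]
    have hW'' : Wt B (m - c) w''
        = (∑ r ∈ Finset.range s, B (w r) (w (r + 1)))
          + ∑ r ∈ Finset.range (m - t), B (w (t + r)) (w (t + r + 1)) := by
      have e := Finset.sum_range_add (fun r => B (w'' r) (w'' (r + 1))) s (m - t)
      rw [show s + (m - t) = m - c by omega] at e
      rw [Wt, e]
      congr 1
      · refine Finset.sum_congr rfl fun r hr => ?_
        rw [hterm, if_pos (Finset.mem_range.1 hr)]
      · refine Finset.sum_congr rfl fun r _ => ?_
        rw [hterm, if_neg (by omega), show s + r + c = t + r by omega]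
    have e1 := Finset.sum_range_add (fun r => B (w r) (w (r + 1))) t (m - t)
    rw [show t + (m - t) = m by omega] at e1
    have e2 := Finset.sum_range_add (fun r => B (w r) (w (r + 1))) s c
    rw [hsc] at e2
    have hW : Wt B m w
        = ((∑ r ∈ Finset.range s, B (w r) (w (r + 1)))
          + ∑ r ∈ Finset.range c, B (w (s + r)) (w (s + r + 1)))
          + ∑ r ∈ Finset.range (m - t), B (w (t + r)) (w (t + r + 1)) := by
      rw [Wt, e1, e2]
    rw [hW, hW'']
    abel
  have hle : Wt B m w ≤ Wt B (m - c) w'' := by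
    rw [hsplit]
    calc (∑ r ∈ Finset.range c, B (w (s + r)) (w (s + r + 1))) + Wt B (m - c) w''
        ≤ 0 + Wt B (m - c) w'' := add_le_add_left hcyc _
      _ = Wt B (m - c) w'' := zero_add _
  have hends : w'' 0 = i ∧ w'' (m - c) = j := by
    constructor
    · simp [hw'', Nat.zero_le s, hw0]
    · by_cases hmc : m - c ≤ s
      · have hms : m - c = s := by omega
        have hmt : m = t := by omega
        simp only [hw'', hms, if_pos (le_refl s)]
        rw [hws, ← hmt, hwm]
      · simp only [hw'', if_neg hmc]
        rw [show m - c + c = m by omega, hwm]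
  calc tpow B m i j ≤ Wt B m w := hw
    _ ≤ Wt B (m - c) w'' := hle
    _ ≤ tpow B (m - c) (w'' 0) (w'' (m - c)) := Wt_le_pow B (m - c) w''
    _ = tpow B (m - c) i j := by rw [hends.1, hends.2]
    _ ≤ kstar B i j := ih (m - c) (by omega) i j

lemma sclr_le_theta {n : ℕ} (hn : 0 < n) (B : Matrix (Fin n) (Fin n) T) (p q : Fin n → T)
    (hTr : TrB B ≤ 0) (θ : ℝ) (hθ : ∀ m < n, sclr B p q m ≤ (θ : T)) (m : ℕ) :
    sclr B p q m ≤ (θ : T) := by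
  unfold sclr vMv
  refine Finset.sup_le fun i _ => ?_
  obtain ⟨j0, hj0⟩ := tSum_attained hn (fun j => tpow B m i j + p j)
  rw [hj0]
  obtain ⟨c0, hc0⟩ := tSum_attained hn (fun c : Fin n => tpow B (c : ℕ) i j0)
  have h1 : tpow B m i j0 ≤ tpow B (c0 : ℕ) i j0 := by
    have := tpow_le_kstar hn B hTr m i j0
    rw [kstar] at this
    exact le_of_le_of_eq this hc0
  have h2 : tconj (q i) + (tpow B (c0 : ℕ) i j0 + p j0) ≤ sclr B p q (c0 : ℕ) := by
    unfold sclr vMv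
    refine le_trans (add_le_add_right (le_tSum (fun j => tpow B (c0 : ℕ) i j + p j) j0) _) ?_
    exact le_tSum (fun i' => tconj (q i') + tSum fun j => tpow B (c0 : ℕ) i' j + p j) i
  calc tconj (q i) + (tpow B m i j0 + p j0)
      ≤ tconj (q i) + (tpow B (c0 : ℕ) i j0 + p j0) :=
        add_le_add_right (add_le_add_left h1 _) _
    _ ≤ sclr B p q (c0 : ℕ) := h2
    _ ≤ (θ : T) := hθ _ c0.isLt


/-- θ^{−k} (q⁻B^{i₁}p ⋯ q⁻B^{i_{k−1}}p) B^{i₀} p q⁻ B^{i_k}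
    ≤ θ^{−1} B^{i₀} p q⁻ B^{i_k} entrywise, for k ≥ 2. -/
theorem tropical_theta_domination {n : ℕ} (B : Matrix (Fin n) (Fin n) T)
    (p q : Fin n → T) (hp : ∃ i, p i ≠ ⊥) (hq : ∃ i, q i ≠ ⊥)
    (hTr : TrB B ≤ 0) (θ : ℝ) (hθ : ∀ m < n, sclr B p q m ≤ (θ : T))
    (k : ℕ) (hk : 2 ≤ k) (i₀ iₖ : ℕ) (v : Fin (k - 1) → ℕ) (a b : Fin n) :
    ((-(k • θ) : ℝ) : T) + (∑ j, sclr B p q (v j)) +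
        tMulM (tMulM (tpow B i₀) (pqm p q)) (tpow B iₖ) a b ≤
      ((-θ : ℝ) : T) + tMulM (tMulM (tpow B i₀) (pqm p q)) (tpow B iₖ) a b := by
  have hn : 0 < n := a.pos
  refine add_le_add_left ?_ _
  have hsum : (∑ j, sclr B p q (v j)) ≤ (((k - 1 : ℕ) • θ : ℝ) : T) := by
    calc ∑ j, sclr B p q (v j) ≤ ∑ _j : Fin (k - 1), (θ : T) :=
          Finset.sum_le_sum fun j _ => sclr_le_theta hn B p q hTr θ hθ (v j)
      _ = (k - 1 : ℕ) • (θ : T) := by simp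
      _ = (((k - 1 : ℕ) • θ : ℝ) : T) := by exact_mod_cast rfl
  calc ((-(k • θ) : ℝ) : T) + (∑ j, sclr B p q (v j))
      ≤ ((-(k • θ) : ℝ) : T) + (((k - 1 : ℕ) • θ : ℝ) : T) := add_le_add_right hsum _
    _ = ((-θ : ℝ) : T) := by
        rw [← WithBot.coe_add]
        congr 1
        have : ((k - 1 : ℕ) : ℝ) = (k : ℝ) - 1 := by
          push_cast [Nat.cast_sub (by omega : 1 ≤ k)]; ring
        simp [nsmul_eq_mul, this]
        ring
end
end

section
/- Makespan scheduling theorem: let B, D be n×n max-plus matrices, C column-regular, R = B ⊕ DC with Tr(R) ≤ 0; let g be a vector, f and h regular vectors, s⁻ = f⁻C ⊕ h⁻ with s⁻R*g ≤ 0. Then the minimum of x⁻ 1 1ᵀ C x (= max_i (Cx)_i − min_i x_i) over regular x satisfying Bx ≤ x, D(Cx) ≤ x, g ≤ x ≤ h, Cx ≤ f equals θ = ⊕_{0≤i+j≤n−2} ‖s⁻R^i‖·‖CR^j g‖ ⊕ ‖CR*‖ (tropical products). -/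
noncomputable section
/-- Pairs (i,j) of exponents with 0 ≤ i + j ≤ n − 2. -/
def pairSet (n : ℕ) : Finset (ℕ × ℕ) :=
  (Finset.range n ×ˢ Finset.range n).filter (fun ij => ij.1 + ij.2 + 2 ≤ n)
/-! ### Auxiliary lemmas -/

lemma ms_le_tSum {n : ℕ} (f : Fin n → T) (i : Fin n) : f i ≤ tSum f :=
  Finset.le_sup (Finset.mem_univ i)

lemma ms_tSum_le {n : ℕ} {f : Fin n → T} {X : T} (h : ∀ i, f i ≤ X) : tSum f ≤ X :=
  Finset.sup_le fun i _ => h i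

lemma ms_tSum_mono {n : ℕ} {f g : Fin n → T} (h : ∀ i, f i ≤ g i) : tSum f ≤ tSum g :=
  ms_tSum_le fun i => (h i).trans (ms_le_tSum g i)

lemma ms_tSum_congr {n : ℕ} {f g : Fin n → T} (h : ∀ i, f i = g i) : tSum f = tSum g := by
  unfold tSum; exact Finset.sup_congr rfl fun i _ => h i

lemma ms_tSum_add {n : ℕ} (f : Fin n → T) (c : T) : tSum f + c = tSum fun i => f i + c :=
  Finset.comp_sup_eq_sup_comp (· + c) (fun x y => (max_add_add_right x y c).symm)
    (WithBot.bot_add c)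

lemma ms_add_tSum {n : ℕ} (c : T) (f : Fin n → T) : c + tSum f = tSum fun i => c + f i :=
  Finset.comp_sup_eq_sup_comp (c + ·) (fun x y => (max_add_add_left c x y).symm)
    (WithBot.add_bot c)

lemma ms_tSum_comm {m n : ℕ} (f : Fin m → Fin n → T) :
    tSum (fun i => tSum fun j => f i j) = tSum fun j => tSum fun i => f i j :=
  Finset.sup_comm _ _ _

lemma ms_tSum_max {n : ℕ} (f g : Fin n → T) :
    tSum (fun i => max (f i) (g i)) = max (tSum f) (tSum g) := by
  unfold tSum; rw [← Finset.sup_sup]; rfl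

lemma ms_finsetSup_add {α : Type*} (s : Finset α) (F : α → T) (c : T) :
    (s.sup F) + c = s.sup fun i => F i + c :=
  Finset.comp_sup_eq_sup_comp (· + c) (fun x y => (max_add_add_right x y c).symm)
    (WithBot.bot_add c)

/-! scalar lemmas -/

lemma ms_L1 {a X : T} (r : ℝ) (h : a + (r : T) ≤ X) : a ≤ X + ((-r : ℝ) : T) := by
  induction a using WithBot.recBotCoe with
  | bot => exact bot_le
  | coe a =>
    induction X using WithBot.recBotCoe with
    | bot => simp only [← WithBot.coe_add, le_bot_iff, WithBot.coe_ne_bot] at h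
    | coe X =>
      rw [← WithBot.coe_add] at h ⊢
      rw [WithBot.coe_le_coe] at h ⊢
      linarith

lemma ms_L2 {a X : T} (r : ℝ) (h : a ≤ X + ((-r : ℝ) : T)) : a + (r : T) ≤ X := by
  induction a using WithBot.recBotCoe with
  | bot => rw [WithBot.bot_add]; exact bot_le
  | coe a =>
    induction X using WithBot.recBotCoe with
    | bot => rw [WithBot.bot_add] at h; exact absurd h (by simp)
    | coe X =>
      rw [← WithBot.coe_add] at h ⊢
      rw [WithBot.coe_le_coe] at h ⊢
      linarith

lemma ms_L3 {θ a : T} (h : a ≤ θ) : tconj θ + a ≤ 0 := by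
  induction θ using WithBot.recBotCoe with
  | bot => simp [tconj]
  | coe t =>
    induction a using WithBot.recBotCoe with
    | bot => simp [tconj]
    | coe a =>
      rw [WithBot.coe_le_coe] at h
      have : tconj (t : T) = ((-t : ℝ) : T) := rfl
      rw [this, ← WithBot.coe_add, ← WithBot.coe_zero, WithBot.coe_le_coe]
      linarith

lemma ms_L4 {θ a : T} {r : ℝ} (hθ : θ ≠ ⊥) (h : tconj θ + a ≤ (r : T)) :
    a + ((-r : ℝ) : T) ≤ θ := by
  induction θ using WithBot.recBotCoe with
  | bot => exact absurd rfl hθ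
  | coe t =>
    induction a using WithBot.recBotCoe with
    | bot => rw [WithBot.bot_add]; exact bot_le
    | coe a =>
      have ht : tconj (t : T) = ((-t : ℝ) : T) := rfl
      rw [ht, ← WithBot.coe_add, WithBot.coe_le_coe] at h
      rw [← WithBot.coe_add, WithBot.coe_le_coe]
      linarith

lemma ms_L5 {a : T} {r : ℝ} (h : ((-r : ℝ) : T) + a ≤ 0) : a ≤ (r : T) := by
  induction a using WithBot.recBotCoe with
  | bot => exact bot_le
  | coe a =>
    rw [← WithBot.coe_add, ← WithBot.coe_zero, WithBot.coe_le_coe] at h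
    rw [WithBot.coe_le_coe]
    linarith
/-! ### Matrix-algebra lemmas -/

/-- matrix-times-vector. -/
def mvA {n : ℕ} (A : Matrix (Fin n) (Fin n) T) (x : Fin n → T) : Fin n → T :=
  fun i => tSum fun j => A i j + x j

lemma ms_mvA_mono_v {n : ℕ} (A : Matrix (Fin n) (Fin n) T) {x y : Fin n → T}
    (h : ∀ j, x j ≤ y j) (i : Fin n) : mvA A x i ≤ mvA A y i :=
  ms_tSum_mono fun j => add_le_add_right (h j) _

lemma ms_mvA_mono_m {n : ℕ} {A B : Matrix (Fin n) (Fin n) T} (x : Fin n → T)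
    (h : ∀ i j, A i j ≤ B i j) (i : Fin n) : mvA A x i ≤ mvA B x i :=
  ms_tSum_mono fun j => add_le_add_left (h i j) _

lemma ms_mvA_mul {n : ℕ} (A B : Matrix (Fin n) (Fin n) T) (x : Fin n → T) (i : Fin n) :
    mvA (tMulM A B) x i = mvA A (mvA B x) i := by
  unfold mvA tMulM
  calc (tSum fun j => (tSum fun k => A i k + B k j) + x j)
      = tSum fun j => tSum fun k => (A i k + B k j) + x j := by
        exact ms_tSum_congr fun j => ms_tSum_add _ _
    _ = tSum fun k => tSum fun j => (A i k + B k j) + x j := ms_tSum_comm _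
    _ = tSum fun k => A i k + tSum fun j => B k j + x j := by
        refine ms_tSum_congr fun k => ?_
        rw [ms_add_tSum]
        exact ms_tSum_congr fun j => (add_assoc _ _ _)

lemma ms_tMulM_assoc {n : ℕ} (A B C : Matrix (Fin n) (Fin n) T) (i j : Fin n) :
    tMulM (tMulM A B) C i j = tMulM A (tMulM B C) i j := by
  unfold tMulM
  calc (tSum fun k => (tSum fun l => A i l + B l k) + C k j)
      = tSum fun k => tSum fun l => (A i l + B l k) + C k j := by
        exact ms_tSum_congr fun k => ms_tSum_add _ _
    _ = tSum fun l => tSum fun k => (A i l + B l k) + C k j := ms_tSum_comm _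
    _ = tSum fun l => A i l + tSum fun k => B l k + C k j := by
        refine ms_tSum_congr fun l => ?_
        rw [ms_add_tSum]
        exact ms_tSum_congr fun k => (add_assoc _ _ _)

lemma ms_tMulM_mono {n : ℕ} {A B A' B' : Matrix (Fin n) (Fin n) T}
    (hA : ∀ i j, A i j ≤ A' i j) (hB : ∀ i j, B i j ≤ B' i j) (i j : Fin n) :
    tMulM A B i j ≤ tMulM A' B' i j :=
  ms_tSum_mono fun k => add_le_add (hA i k) (hB k j)

lemma ms_tMulM_id_right {n : ℕ} (A : Matrix (Fin n) (Fin n) T) (i j : Fin n) :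
    tMulM A (tId n) i j = A i j := by
  unfold tMulM
  apply le_antisymm
  · refine ms_tSum_le fun k => ?_
    by_cases hk : k = j
    · subst hk; simp [tId]
    · simp [tId, hk]
  · have := ms_le_tSum (fun k => A i k + tId n k j) j
    simpa [tId] using this

lemma ms_tMulM_id_left {n : ℕ} (A : Matrix (Fin n) (Fin n) T) (i j : Fin n) :
    tMulM (tId n) A i j = A i j := by
  unfold tMulM
  apply le_antisymm
  · refine ms_tSum_le fun k => ?_
    by_cases hk : i = k
    · subst hk; simp [tId]
    · simp [tId, hk]
  · have := ms_le_tSum (fun k => tId n i k + A k j) i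
    simpa [tId] using this

lemma ms_mvA_id {n : ℕ} (x : Fin n → T) (i : Fin n) : mvA (tId n) x i = x i := by
  unfold mvA
  apply le_antisymm
  · refine ms_tSum_le fun j => ?_
    by_cases hj : i = j
    · subst hj; simp [tId]
    · simp [tId, hj]
  · have := ms_le_tSum (fun j => tId n i j + x j) i
    simpa [tId] using this

lemma ms_tpow_succ_left {n : ℕ} (A : Matrix (Fin n) (Fin n) T) (k : ℕ) (i j : Fin n) :
    tpow A (k + 1) i j = tMulM A (tpow A k) i j := by
  induction k generalizing i j with
  | zero => show tMulM (tId n) A i j = tMulM A (tId n) i j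
            rw [ms_tMulM_id_left, ms_tMulM_id_right]
  | succ k ih =>
    show tMulM (tpow A (k+1)) A i j = tMulM A (tMulM (tpow A k) A) i j
    rw [← ms_tMulM_assoc]
    unfold tMulM
    exact ms_tSum_congr fun c => by rw [ih]; rfl

lemma ms_tpow_add {n : ℕ} (A : Matrix (Fin n) (Fin n) T) (a b : ℕ) (i j : Fin n) :
    tpow A (a + b) i j = tMulM (tpow A a) (tpow A b) i j := by
  induction b generalizing i j with
  | zero => exact (ms_tMulM_id_right _ _ _).symm
  | succ b ih =>
    show tMulM (tpow A (a+b)) A i j = tMulM (tpow A a) (tMulM (tpow A b) A) i j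
    rw [← ms_tMulM_assoc]
    unfold tMulM
    exact ms_tSum_congr fun c => by rw [ih]; rfl

lemma ms_tpow_le_kstar {n : ℕ} (A : Matrix (Fin n) (Fin n) T) {k : ℕ} (hk : k < n)
    (i j : Fin n) : tpow A k i j ≤ kstar A i j := by
  have := ms_le_tSum (fun c : Fin n => tpow A (c : ℕ) i j) ⟨k, hk⟩
  exact this

lemma ms_tId_le_kstar {n : ℕ} (A : Matrix (Fin n) (Fin n) T) (hn : 0 < n) (i j : Fin n) :
    tId n i j ≤ kstar A i j := ms_tpow_le_kstar A hn i j
/-! ### Walk lemmas -/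

def nwt {n : ℕ} (G : Matrix (Fin n) (Fin n) T) (w : ℕ → Fin n) (m : ℕ) : T :=
  ∑ t ∈ Finset.range m, G (w t) (w (t + 1))

lemma ms_nwt_le_tpow {n : ℕ} (G : Matrix (Fin n) (Fin n) T) (w : ℕ → Fin n) :
    ∀ m : ℕ, nwt G w m ≤ tpow G m (w 0) (w m) := by
  intro m
  induction m with
  | zero =>
    show (∑ t ∈ Finset.range 0, G (w t) (w (t+1))) ≤ tId n (w 0) (w 0)
    simp [tId]
  | succ m ih =>
    show (∑ t ∈ Finset.range (m+1), G (w t) (w (t+1))) ≤ tMulM (tpow G m) G (w 0) (w (m+1))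
    rw [Finset.sum_range_succ]
    calc (∑ t ∈ Finset.range m, G (w t) (w (t+1))) + G (w m) (w (m+1))
        ≤ tpow G m (w 0) (w m) + G (w m) (w (m+1)) := add_le_add_left ih _
      _ ≤ tMulM (tpow G m) G (w 0) (w (m+1)) :=
          ms_le_tSum (fun k => tpow G m (w 0) k + G k (w (m+1))) (w m)

lemma ms_tpow_le_of_walks {n : ℕ} (G : Matrix (Fin n) (Fin n) T) :
    ∀ (m : ℕ) (i j : Fin n) (X : T),
      (∀ w : ℕ → Fin n, w 0 = i → w m = j → nwt G w m ≤ X) → tpow G m i j ≤ X := by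
  intro m
  induction m with
  | zero =>
    intro i j X h
    show tId n i j ≤ X
    by_cases hij : i = j
    · subst hij
      have := h (fun _ => i) rfl rfl
      simpa [nwt, tId] using this
    · simp [tId, hij]
  | succ m ih =>
    intro i j X h
    show tMulM (tpow G m) G i j ≤ X
    refine ms_tSum_le fun k => ?_
    rcases hG : G k j with _ | r
    · show tpow G m i k + (⊥ : T) ≤ X
      rw [WithBot.add_bot]; exact bot_le
    · have hr : G k j = (r : T) := hG
      refine ms_L2 r ?_
      refine ih i k (X + ((-r : ℝ) : T)) ?_
      intro w hw0 hwm
      set w' : ℕ → Fin n := fun t => if t ≤ m then w t else j with hw'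
      have h0 : w' 0 = i := by
        rw [show w' 0 = w 0 from if_pos (Nat.zero_le m), hw0]
      have hm1 : w' (m + 1) = j := if_neg (by omega)
      have hsum : nwt G w' (m + 1) = nwt G w m + (r : T) := by
        unfold nwt
        rw [Finset.sum_range_succ]
        congr 1
        · refine Finset.sum_congr rfl fun t ht => ?_
          have ht' := Finset.mem_range.mp ht
          have h1 : w' t = w t := if_pos (by omega)
          have h2 : w' (t + 1) = w (t + 1) := if_pos (by omega)
          rw [h1, h2]
        · have h1 : w' m = w m := if_pos le_rfl
          rw [h1, hm1, hwm, hr]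
      have := h w' h0 hm1
      rw [hsum] at this
      exact ms_L1 r this

lemma ms_tpow_le_kstar_of_tr {n : ℕ} {G : Matrix (Fin n) (Fin n) T}
    (htr : ∀ c, 1 ≤ c → c ≤ n → tTr (tpow G c) ≤ 0) :
    ∀ m, m ≤ n → ∀ i j, tpow G m i j ≤ kstar G i j := by
  intro m hm i j
  rcases lt_or_eq_of_le hm with hlt | heq
  · exact ms_tpow_le_kstar G hlt i j
  rw [heq]; clear heq hm
  refine ms_tpow_le_of_walks G n i j _ ?_
  intro w hw0 hwn
  -- pigeonhole
  obtain ⟨a', b', hne, heq⟩ := Fintype.exists_ne_map_eq_of_card_lt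
    (fun t : Fin (n + 1) => w (t : ℕ)) (by simp)
  -- normalize to a < b
  obtain ⟨a, b, hab, hbn, hwab⟩ : ∃ a b : ℕ, a < b ∧ b ≤ n ∧ w a = w b := by
    rcases hne.lt_or_gt with hlt | hlt
    · exact ⟨a', b', hlt, Nat.lt_succ_iff.mp b'.isLt, heq⟩
    · exact ⟨b', a', hlt, Nat.lt_succ_iff.mp a'.isLt, heq.symm⟩
  set c : ℕ := b - a with hc
  have hacb : a + c = b := by omega
  have hc1 : 1 ≤ c := by omega
  have hcn : c ≤ n := by omega
  have hn1 : 1 ≤ n := by omega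
  -- middle closed walk
  have hmid : (∑ t ∈ Finset.Ico a b, G (w t) (w (t + 1))) ≤ 0 := by
    have h1 : (∑ t ∈ Finset.Ico a b, G (w t) (w (t + 1)))
        = nwt G (fun t => w (a + t)) c := by
      rw [Finset.sum_Ico_eq_sum_range]
      rfl
    rw [h1]
    have h2 := ms_nwt_le_tpow G (fun t => w (a + t)) c
    have h3 : w (a + 0) = w a := by rw [Nat.add_zero]
    have h4 : w (a + c) = w a := by rw [hacb, hwab]
    rw [h3, h4] at h2
    refine h2.trans ?_
    exact (ms_le_tSum (fun k => tpow G c k k) (w a)).trans (htr c hc1 hcn)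
  -- spliced walk
  set w' : ℕ → Fin n := fun t => if t < a then w t else w (t + c) with hw'
  have hw'0 : w' 0 = i := by
    rcases Nat.eq_zero_or_pos a with ha0 | hapos
    · have h1 : w' 0 = w (0 + c) := if_neg (by omega)
      rw [ha0] at hwab
      rw [h1, Nat.zero_add]
      have hcb : c = b := by omega
      rw [hcb, ← hwab, hw0]
    · have h1 : w' 0 = w 0 := if_pos hapos
      rw [h1, hw0]
  have hw'nc : w' (n - c) = j := by
    have h1 : w' (n - c) = w (n - c + c) := if_neg (by omega)
    have h2 : n - c + c = n := by omega
    rw [h1, h2, hwn]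
  have hP : nwt G w' (n - c)
      = (∑ t ∈ Finset.range a, G (w t) (w (t + 1)))
        + ∑ t ∈ Finset.Ico b n, G (w t) (w (t + 1)) := by
    unfold nwt
    rw [Finset.range_eq_Ico,
      ← Finset.sum_Ico_consecutive _ (Nat.zero_le a) (by omega : a ≤ n - c)]
    congr 1
    · rw [← Finset.range_eq_Ico]
      refine Finset.sum_congr rfl fun t ht => ?_
      have ht' := Finset.mem_range.mp ht
      have h1 : w' t = w t := if_pos ht'
      have h2 : w' (t + 1) = w (t + 1) := by
        rcases Nat.lt_or_ge (t + 1) a with hlt | hge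
        · exact if_pos hlt
        · have hta : t + 1 = a := by omega
          have h3 : w' (t + 1) = w (t + 1 + c) := if_neg (by omega)
          rw [h3]
          have h4 : t + 1 + c = b := by omega
          rw [h4, ← hwab, hta]
      rw [h1, h2]
    · rw [Finset.sum_Ico_eq_sum_range, Finset.sum_Ico_eq_sum_range]
      have hlen : n - c - a = n - b := by omega
      rw [hlen]
      refine Finset.sum_congr rfl fun s _ => ?_
      have h1 : w' (a + s) = w (a + s + c) := if_neg (by omega)
      have h2 : w' (a + s + 1) = w (a + s + 1 + c) := if_neg (by omega)
      rw [h1, h2]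
      have e1 : a + s + c = b + s := by omega
      have e2 : a + s + 1 + c = b + s + 1 := by omega
      rw [e1, e2]
  have hsplit : nwt G w n
      = ((∑ t ∈ Finset.range a, G (w t) (w (t + 1)))
          + ∑ t ∈ Finset.Ico a b, G (w t) (w (t + 1)))
        + ∑ t ∈ Finset.Ico b n, G (w t) (w (t + 1)) := by
    unfold nwt
    rw [Finset.range_eq_Ico,
      ← Finset.sum_Ico_consecutive _ (Nat.zero_le b) hbn,
      ← Finset.sum_Ico_consecutive _ (Nat.zero_le a) hab.le,
      ← Finset.range_eq_Ico]
  calc nwt G w n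
      ≤ (∑ t ∈ Finset.range a, G (w t) (w (t + 1)))
        + ∑ t ∈ Finset.Ico b n, G (w t) (w (t + 1)) := by
        rw [hsplit]
        refine add_le_add_left ?_ _
        calc (∑ t ∈ Finset.range a, G (w t) (w (t + 1)))
              + ∑ t ∈ Finset.Ico a b, G (w t) (w (t + 1))
            ≤ (∑ t ∈ Finset.range a, G (w t) (w (t + 1))) + 0 := add_le_add_right hmid _
          _ = _ := add_zero _
    _ = nwt G w' (n - c) := hP.symm
    _ ≤ tpow G (n - c) (w' 0) (w' (n - c)) := ms_nwt_le_tpow G w' (n - c)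
    _ = tpow G (n - c) i j := by rw [hw'0, hw'nc]
    _ ≤ kstar G i j := ms_tpow_le_kstar G (by omega) i j

lemma ms_mul_kstar_le {n : ℕ} {G : Matrix (Fin n) (Fin n) T}
    (htr : ∀ c, 1 ≤ c → c ≤ n → tTr (tpow G c) ≤ 0) (i j : Fin n) :
    tMulM G (kstar G) i j ≤ kstar G i j := by
  show (tSum fun k => G i k + kstar G k j) ≤ kstar G i j
  refine ms_tSum_le fun k => ?_
  show G i k + tSum (fun c : Fin n => tpow G (c : ℕ) k j) ≤ kstar G i j
  rw [ms_add_tSum]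
  refine ms_tSum_le fun c => ?_
  calc G i k + tpow G (c : ℕ) k j
      ≤ tMulM G (tpow G (c : ℕ)) i j := ms_le_tSum (fun k' => G i k' + tpow G (c:ℕ) k' j) k
    _ = tpow G ((c : ℕ) + 1) i j := (ms_tpow_succ_left G _ i j).symm
    _ ≤ kstar G i j := ms_tpow_le_kstar_of_tr htr ((c : ℕ) + 1) c.isLt i j
lemma ms_add_finsetSup {α : Type*} (s : Finset α) (F : α → T) (c : T) :
    c + s.sup F = s.sup fun i => c + F i :=
  Finset.comp_sup_eq_sup_comp (c + ·) (fun x y => (max_add_add_left c x y).symm)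
    (WithBot.add_bot c)

lemma ms_max_add_max_le {A B Cc Dd X : T} (h1 : A + Cc ≤ X) (h2 : A + Dd ≤ X)
    (h3 : B + Cc ≤ X) (h4 : B + Dd ≤ X) : max A B + max Cc Dd ≤ X := by
  rw [← max_add_add_right A B (max Cc Dd)]
  refine max_le ?_ ?_
  · rw [← max_add_add_left A Cc Dd]; exact max_le h1 h2
  · rw [← max_add_add_left B Cc Dd]; exact max_le h3 h4

lemma ms_tMulM_congr_right {n : ℕ} (A : Matrix (Fin n) (Fin n) T)
    {X Y : Matrix (Fin n) (Fin n) T} (h : ∀ i j, X i j = Y i j) (a b : Fin n) :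
    tMulM A X a b = tMulM A Y a b :=
  ms_tSum_congr fun c => by rw [h c b]

lemma ms_coe_unbot' {a : T} (h : a ≠ ⊥) : ((WithBot.unbotD 0 a : ℝ) : T) = a := by
  induction a using WithBot.recBotCoe with
  | bot => exact absurd rfl h
  | coe a => rfl
/-- Makespan scheduling theorem: the minimum of x⁻ 1 1ᵀ C x over regular x with
Bx ≤ x, D(Cx) ≤ x, g ≤ x ≤ h, Cx ≤ f equals
θ = ⊕_{0≤i+j≤n−2} ‖s⁻R^i‖ ‖C R^j g‖ ⊕ ‖C R*‖, with R = B ⊕ DC, s⁻ = f⁻C ⊕ h⁻. -/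
theorem tropical_makespan_scheduling {n : ℕ}
    (B D C : Matrix (Fin n) (Fin n) T) (hC : ∀ j, ∃ i, C i j ≠ ⊥)
    (g : Fin n → T) (f h : Fin n → ℝ)
    (R : Matrix (Fin n) (Fin n) T)
    (hRdef : R = fun i j => max (B i j) (tMulM D C i j))
    (hTr : TrB R ≤ 0)
    (sneg : Fin n → T)
    (hsdef : sneg = fun j =>
      max (tSum fun i => ((-(f i) : ℝ) : T) + C i j) ((-(h j) : ℝ) : T))
    (hfeas : tSum (fun j => sneg j + tSum fun l => kstar R j l + g l) ≤ 0)
    (θ : T)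
    (hθdef : θ = max
      ((pairSet n).sup fun ij =>
        (tSum fun l => tSum fun m => sneg m + tpow R ij.1 m l) +
          (tSum fun a => tSum fun b => tMulM C (tpow R ij.2) a b + g b))
      (tSum fun a => tSum fun b => tMulM C (kstar R) a b)) :
    IsLeast {v : T | ∃ x : Fin n → ℝ,
      (∀ i, tSum (fun j => B i j + (x j : T)) ≤ (x i : T)) ∧
      (∀ i, tSum (fun j => D i j + tSum fun l => C j l + (x l : T)) ≤ (x i : T)) ∧
      (∀ i, g i ≤ (x i : T)) ∧ (∀ i, x i ≤ h i) ∧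
      (∀ i, tSum (fun j => C i j + (x j : T)) ≤ (f i : T)) ∧
      (tSum fun i => tSum fun j => C i j + (x j : T)) +
        (tSum fun i => ((-(x i) : ℝ) : T)) = v} θ := by
  have hRij : ∀ i j, R i j = max (B i j) (tMulM D C i j) := fun i j => by rw [hRdef]
  have hsnegj : ∀ j, sneg j
      = max (tSum fun i => ((-(f i) : ℝ) : T) + C i j) ((-(h j) : ℝ) : T) :=
    fun j => by rw [hsdef]
  -- ### Lower bound
  have lowb : ∀ x : Fin n → ℝ,
      (∀ i, tSum (fun j => B i j + (x j : T)) ≤ (x i : T)) →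
      (∀ i, tSum (fun j => D i j + tSum fun l => C j l + (x l : T)) ≤ (x i : T)) →
      (∀ i, g i ≤ (x i : T)) → (∀ i, x i ≤ h i) →
      (∀ i, tSum (fun j => C i j + (x j : T)) ≤ (f i : T)) →
      θ ≤ (tSum fun i => tSum fun j => C i j + ((x j : ℝ) : T)) +
        (tSum fun i => ((-(x i) : ℝ) : T)) := by
    intro x h1 h2 h3 h4 h5
    set xT : Fin n → T := fun l => ((x l : ℝ) : T) with hxT
    set CxN : T := tSum fun i => tSum fun j => C i j + xT j with hCxN
    set Xinv : T := tSum fun i => ((-(x i) : ℝ) : T) with hXinv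
    have hRx : ∀ i, mvA R xT i ≤ xT i := by
      intro i
      show (tSum fun j => R i j + xT j) ≤ xT i
      calc (tSum fun j => R i j + xT j)
          = tSum fun j => max (B i j + xT j) (tMulM D C i j + xT j) := by
            refine ms_tSum_congr fun j => ?_
            rw [hRij i j, ← max_add_add_right]
        _ = max (tSum fun j => B i j + xT j) (tSum fun j => tMulM D C i j + xT j) :=
            ms_tSum_max _ _
        _ ≤ xT i := by
            refine max_le (h1 i) ?_
            have e : (tSum fun j => tMulM D C i j + xT j) = mvA D (mvA C xT) i :=
              ms_mvA_mul D C xT i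
            rw [e]; exact h2 i
    have hpow : ∀ k, ∀ i, mvA (tpow R k) xT i ≤ xT i := by
      intro k
      induction k with
      | zero => intro i; rw [show tpow R 0 = tId n from rfl, ms_mvA_id]
      | succ k ih =>
        intro i
        show mvA (tMulM (tpow R k) R) xT i ≤ xT i
        rw [ms_mvA_mul]
        exact le_trans (ms_mvA_mono_v (tpow R k) hRx i) (ih i)
    have hkstar_x : ∀ i, mvA (kstar R) xT i ≤ xT i := by
      intro i
      show (tSum fun j => kstar R i j + xT j) ≤ xT i
      refine ms_tSum_le fun j => ?_
      show (tSum fun c : Fin n => tpow R (c : ℕ) i j) + xT j ≤ xT i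
      rw [ms_tSum_add]
      refine ms_tSum_le fun c => ?_
      exact le_trans (ms_le_tSum (fun j' => tpow R (c : ℕ) i j' + xT j') j) (hpow (c : ℕ) i)
    have hsx : ∀ m, sneg m + xT m ≤ 0 := by
      intro m
      rw [hsnegj m, ← max_add_add_right]
      refine max_le ?_ ?_
      · rw [ms_tSum_add]
        refine ms_tSum_le fun i => ?_
        rw [add_assoc]
        have hC5 : C i m + xT m ≤ (f i : T) :=
          le_trans (ms_le_tSum (fun j => C i j + xT j) m) (h5 i)
        calc ((-(f i) : ℝ) : T) + (C i m + xT m) ≤ ((-(f i) : ℝ) : T) + (f i : T) :=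
              add_le_add_right hC5 _
          _ = 0 := by rw [← WithBot.coe_add]; norm_num
      · show ((-(h m) : ℝ) : T) + ((x m : ℝ) : T) ≤ 0
        rw [← WithBot.coe_add, ← WithBot.coe_zero, WithBot.coe_le_coe]
        have := h4 m; linarith
    rw [hθdef]
    refine max_le ?_ ?_
    · -- pair part
      refine Finset.sup_le fun ij hij => ?_
      have hN1 : (tSum fun l => tSum fun m => sneg m + tpow R ij.1 m l) ≤ Xinv := by
        refine ms_tSum_le fun l => ms_tSum_le fun m => ?_
        have key : (sneg m + tpow R ij.1 m l) + ((x l : ℝ) : T) ≤ 0 := by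
          rw [add_assoc]
          calc sneg m + (tpow R ij.1 m l + xT l)
              ≤ sneg m + xT m := add_le_add_right
                (le_trans (ms_le_tSum (fun j => tpow R ij.1 m j + xT j) l) (hpow ij.1 m)) _
            _ ≤ 0 := hsx m
        have := ms_L1 (x l) key
        rw [zero_add] at this
        exact le_trans this (ms_le_tSum (fun i => ((-(x i) : ℝ) : T)) l)
      have hN2 : (tSum fun a => tSum fun b => tMulM C (tpow R ij.2) a b + g b) ≤ CxN := by
        refine ms_tSum_le fun a => ms_tSum_le fun b => ?_
        show (tSum fun c => C a c + tpow R ij.2 c b) + g b ≤ CxN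
        rw [ms_tSum_add]
        refine ms_tSum_le fun c => ?_
        rw [add_assoc]
        have : tpow R ij.2 c b + g b ≤ xT c := by
          calc tpow R ij.2 c b + g b ≤ tpow R ij.2 c b + xT b := add_le_add_right (h3 b) _
            _ ≤ mvA (tpow R ij.2) xT c := ms_le_tSum (fun j => tpow R ij.2 c j + xT j) b
            _ ≤ xT c := hpow ij.2 c
        calc C a c + (tpow R ij.2 c b + g b) ≤ C a c + xT c := add_le_add_right this _
          _ ≤ tSum fun j => C a j + xT j := ms_le_tSum (fun j => C a j + xT j) c
          _ ≤ CxN := ms_le_tSum (fun i => tSum fun j => C i j + xT j) a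
      calc _ ≤ Xinv + CxN := add_le_add hN1 hN2
        _ = CxN + Xinv := add_comm _ _
    · -- kstar part
      refine ms_tSum_le fun a => ms_tSum_le fun b => ?_
      show (tSum fun c => C a c + kstar R c b) ≤ CxN + Xinv
      refine ms_tSum_le fun c => ?_
      have key : (C a c + kstar R c b) + ((x b : ℝ) : T) ≤ CxN := by
        rw [add_assoc]
        have : kstar R c b + xT b ≤ xT c :=
          le_trans (ms_le_tSum (fun j => kstar R c j + xT j) b) (hkstar_x c)
        calc C a c + (kstar R c b + xT b) ≤ C a c + xT c := add_le_add_right this _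
          _ ≤ tSum fun j => C a j + xT j := ms_le_tSum (fun j => C a j + xT j) c
          _ ≤ CxN := ms_le_tSum (fun i => tSum fun j => C i j + xT j) a
      exact le_trans (ms_L1 (x b) key)
        (add_le_add_right (ms_le_tSum (fun i => ((-(x i) : ℝ) : T)) b) _)
  constructor
  · -- membership
    by_cases hn0 : n = 0
    · subst hn0
      refine ⟨fun _ => 0, fun i => i.elim0, fun i => i.elim0, fun i => i.elim0,
        fun i => i.elim0, fun i => i.elim0, ?_⟩
      have hbot : ∀ (fz : Fin 0 → T), tSum fz = ⊥ := fun fz => by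
        simp [tSum]
      have hps : pairSet 0 = ∅ := by simp [pairSet]
      rw [hθdef, hps]
      simp [hbot, WithBot.add_bot]
    have hn : 0 < n := Nat.pos_of_ne_zero hn0
    have hθ2 : (tSum fun a => tSum fun b => tMulM C (kstar R) a b) ≤ θ :=
      hθdef ▸ le_max_right _ _
    have hθbot : θ ≠ ⊥ := by
      obtain ⟨i0, hi0⟩ := hC ⟨0, hn⟩
      have h1 : C i0 ⟨0, hn⟩ ≤ θ := by
        calc C i0 ⟨0, hn⟩ = C i0 ⟨0, hn⟩ + tId n ⟨0, hn⟩ ⟨0, hn⟩ := by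
              rw [show tId n ⟨0, hn⟩ ⟨0, hn⟩ = 0 from if_pos rfl, add_zero]
          _ ≤ C i0 ⟨0, hn⟩ + kstar R ⟨0, hn⟩ ⟨0, hn⟩ :=
              add_le_add_right (ms_tId_le_kstar R hn _ _) _
          _ ≤ tMulM C (kstar R) i0 ⟨0, hn⟩ :=
              ms_le_tSum (fun c => C i0 c + kstar R c ⟨0, hn⟩) ⟨0, hn⟩
          _ ≤ tSum fun b => tMulM C (kstar R) i0 b :=
              ms_le_tSum (fun b => tMulM C (kstar R) i0 b) ⟨0, hn⟩
          _ ≤ tSum fun a => tSum fun b => tMulM C (kstar R) a b :=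
              ms_le_tSum (fun a => tSum fun b => tMulM C (kstar R) a b) i0
          _ ≤ θ := hθ2
      intro hb
      rw [hb, le_bot_iff] at h1
      exact hi0 h1
    have hCk : ∀ j, j < n → ∀ e d, tMulM C (tpow R j) e d ≤ θ := by
      intro j hj e d
      calc tMulM C (tpow R j) e d ≤ tMulM C (kstar R) e d :=
            ms_tMulM_mono (fun _ _ => le_rfl) (fun i' j' => ms_tpow_le_kstar R hj i' j') e d
        _ ≤ tSum fun b => tMulM C (kstar R) e b := ms_le_tSum (fun b => tMulM C (kstar R) e b) d
        _ ≤ tSum fun a => tSum fun b => tMulM C (kstar R) a b :=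
            ms_le_tSum (fun a => tSum fun b => tMulM C (kstar R) a b) e
        _ ≤ θ := hθ2
    set p : Fin n → T := fun j => tconj θ + tSum (fun a => C a j) with hp
    set q : Matrix (Fin n) (Fin n) T := fun _ j => p j with hqdef
    set G : Matrix (Fin n) (Fin n) T := fun i j => max (R i j) (p j) with hGdef
    have hqRq : ∀ j, j < n → ∀ a b, tMulM (tMulM q (tpow R j)) q a b ≤ q a b := by
      intro j hj a b
      have inner : ∀ d, tMulM q (tpow R j) a d ≤ 0 := by
        intro d
        show (tSum fun c => q a c + tpow R j c d) ≤ 0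
        refine ms_tSum_le fun c => ?_
        show (tconj θ + tSum fun e => C e c) + tpow R j c d ≤ 0
        rw [add_assoc]
        refine ms_L3 ?_
        rw [ms_tSum_add]
        refine ms_tSum_le fun e => ?_
        exact le_trans (ms_le_tSum (fun c' => C e c' + tpow R j c' d) c) (hCk j hj e d)
      show (tSum fun d => tMulM q (tpow R j) a d + q d b) ≤ q a b
      refine ms_tSum_le fun d => ?_
      show tMulM q (tpow R j) a d + p b ≤ p b
      calc tMulM q (tpow R j) a d + p b ≤ 0 + p b := add_le_add_left (inner d) _
        _ = p b := zero_add _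
    set pairs : ℕ → Finset (ℕ × ℕ) := fun k =>
      (Finset.range n ×ˢ Finset.range n).filter (fun ij => ij.1 + ij.2 + 1 ≤ k) with hpairs
    set W : ℕ × ℕ → Matrix (Fin n) (Fin n) T := fun ij =>
      tMulM (tpow R ij.1) (tMulM q (tpow R ij.2)) with hW
    set Mk : ℕ → Matrix (Fin n) (Fin n) T := fun k => fun a b =>
      max (tpow R k a b) ((pairs k).sup fun ij => W ij a b) with hMk
    have hmem : ∀ k i j, i < n → j < n → i + j + 1 ≤ k → (i, j) ∈ pairs k := by
      intro k i j hi hj hk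
      rw [hpairs]
      simp only [Finset.mem_filter, Finset.mem_product, Finset.mem_range]
      exact ⟨⟨hi, hj⟩, hk⟩
    have hmemE : ∀ k (ij : ℕ × ℕ), ij ∈ pairs k →
        ij.1 < n ∧ ij.2 < n ∧ ij.1 + ij.2 + 1 ≤ k := by
      intro k ij hij
      rw [hpairs] at hij
      simp only [Finset.mem_filter, Finset.mem_product, Finset.mem_range] at hij
      exact ⟨hij.1.1, hij.1.2, hij.2⟩
    have claimB : ∀ k, k ≤ n → ∀ a b, tpow G k a b ≤ Mk k a b := by
      intro k
      induction k with
      | zero => intro _ a b; exact le_max_left _ _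
      | succ k ih =>
        intro hk1 a b
        have hk : k ≤ n := Nat.le_of_succ_le hk1
        show (tSum fun c => tpow G k a c + G c b) ≤ Mk (k + 1) a b
        refine ms_tSum_le fun c => ?_
        refine le_trans (add_le_add_left (ih hk a c) _) ?_
        show max (tpow R k a c) ((pairs k).sup fun ij => W ij a c) + max (R c b) (p b)
            ≤ Mk (k + 1) a b
        refine ms_max_add_max_le ?_ ?_ ?_ ?_
        · -- R^k entry + R entry
          refine le_trans (ms_le_tSum (fun c' => tpow R k a c' + R c' b) c) ?_
          exact le_max_left _ _
        · -- R^k entry + p b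
          have h1 : tpow R k a c + p b ≤ W (k, 0) a b := by
            have e : tMulM q (tpow R 0) c b = q c b := ms_tMulM_id_right q c b
            calc tpow R k a c + p b = tpow R k a c + tMulM q (tpow R 0) c b := by
                  rw [e]
              _ ≤ W (k, 0) a b :=
                  ms_le_tSum (fun c' => tpow R k a c' + tMulM q (tpow R 0) c' b) c
          refine le_trans h1 (le_trans (Finset.le_sup (f := fun ij => W ij a b) ?_)
            (le_max_right (tpow R (k + 1) a b) _))
          exact hmem (k + 1) k 0 (by omega) hn (by omega)
        · -- sup entry + R entry
          rw [ms_finsetSup_add]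
          refine Finset.sup_le fun ij hij => ?_
          obtain ⟨hi, hj, hk2⟩ := hmemE k ij hij
          have step1 : W ij a c + R c b ≤ tMulM (W ij) R a b :=
            ms_le_tSum (fun c' => W ij a c' + R c' b) c
          have step2 : tMulM (W ij) R a b = W (ij.1, ij.2 + 1) a b := by
            rw [hW]
            rw [ms_tMulM_assoc]
            exact ms_tMulM_congr_right _
              (fun i' j' => ms_tMulM_assoc q (tpow R ij.2) R i' j') a b
          refine le_trans step1 (le_trans (le_of_eq step2) ?_)
          refine le_trans (Finset.le_sup (f := fun ij => W ij a b) ?_)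
            (le_max_right (tpow R (k + 1) a b) _)
          exact hmem (k + 1) ij.1 (ij.2 + 1) hi (by omega) (by omega)
        · -- sup entry + p b
          rw [ms_finsetSup_add]
          refine Finset.sup_le fun ij hij => ?_
          obtain ⟨hi, hj, hk2⟩ := hmemE k ij hij
          have step1 : W ij a c + p b ≤ tMulM (W ij) q a b :=
            ms_le_tSum (fun c' => W ij a c' + q c' b) c
          have step2 : tMulM (W ij) q a b
              = tMulM (tpow R ij.1) (tMulM (tMulM q (tpow R ij.2)) q) a b :=
            ms_tMulM_assoc _ _ _ a b
          have step3 : tMulM (tpow R ij.1) (tMulM (tMulM q (tpow R ij.2)) q) a b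
              ≤ tMulM (tpow R ij.1) q a b :=
            ms_tMulM_mono (fun _ _ => le_rfl) (hqRq ij.2 hj) a b
          have step4 : tMulM (tpow R ij.1) q a b = W (ij.1, 0) a b :=
            ms_tMulM_congr_right _ (fun i' j' => (ms_tMulM_id_right q i' j').symm) a b
          refine le_trans step1 (le_trans (le_of_eq step2) (le_trans step3
            (le_trans (le_of_eq step4) ?_)))
          refine le_trans (Finset.le_sup (f := fun ij => W ij a b) ?_)
            (le_max_right (tpow R (k + 1) a b) _)
          exact hmem (k + 1) ij.1 0 hi hn (by omega)
    have htheta1 : ((pairSet n).sup fun ij =>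
        (tSum fun l => tSum fun m => sneg m + tpow R ij.1 m l) +
          (tSum fun a => tSum fun b => tMulM C (tpow R ij.2) a b + g b)) ≤ θ :=
      hθdef ▸ le_max_left _ _
    have htrR : ∀ c, 1 ≤ c → c ≤ n → tTr (tpow R c) ≤ 0 := by
      intro c h1c hcn
      refine le_trans ?_ hTr
      have := ms_le_tSum (fun k : Fin n => tTr (tpow R ((k : ℕ) + 1))) ⟨c - 1, by omega⟩
      simpa [TrB, show c - 1 + 1 = c by omega] using this
    have htrW : ∀ ij : ℕ × ℕ, ij.1 + ij.2 + 1 ≤ n → (tSum fun a => W ij a a) ≤ 0 := by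
      intro ij hijn
      refine ms_tSum_le fun a => ?_
      show (tSum fun c => tpow R ij.1 a c + tMulM q (tpow R ij.2) c a) ≤ 0
      refine ms_tSum_le fun c => ?_
      show tpow R ij.1 a c + (tSum fun d => q c d + tpow R ij.2 d a) ≤ 0
      rw [ms_add_tSum]
      refine ms_tSum_le fun d => ?_
      show tpow R ij.1 a c + ((tconj θ + tSum fun e => C e d) + tpow R ij.2 d a) ≤ 0
      have e1 : (tconj θ + tSum fun e => C e d) + tpow R ij.2 d a
          = tSum fun e => tconj θ + (C e d + tpow R ij.2 d a) := by
        rw [add_assoc, ms_tSum_add, ms_add_tSum]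
      rw [e1, ms_add_tSum]
      refine ms_tSum_le fun e => ?_
      have e2 : tpow R ij.1 a c + (tconj θ + (C e d + tpow R ij.2 d a))
          = tconj θ + ((C e d + tpow R ij.2 d a) + tpow R ij.1 a c) := by
        abel
      rw [e2]
      refine ms_L3 ?_
      calc (C e d + tpow R ij.2 d a) + tpow R ij.1 a c
          ≤ tMulM C (tpow R ij.2) e a + tpow R ij.1 a c :=
            add_le_add_left (ms_le_tSum (fun d' => C e d' + tpow R ij.2 d' a) d) _
        _ ≤ tMulM (tMulM C (tpow R ij.2)) (tpow R ij.1) e c :=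
            ms_le_tSum (fun a' => tMulM C (tpow R ij.2) e a' + tpow R ij.1 a' c) a
        _ = tMulM C (tMulM (tpow R ij.2) (tpow R ij.1)) e c := ms_tMulM_assoc _ _ _ e c
        _ = tMulM C (tpow R (ij.2 + ij.1)) e c :=
            ms_tMulM_congr_right C (fun i' j' => (ms_tpow_add R ij.2 ij.1 i' j').symm) e c
        _ ≤ θ := hCk (ij.2 + ij.1) (by omega) e c
    have htrG : ∀ c, 1 ≤ c → c ≤ n → tTr (tpow G c) ≤ 0 := by
      intro c h1c hcn
      show (tSum fun a => tpow G c a a) ≤ 0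
      refine le_trans (ms_tSum_mono fun a => claimB c hcn a a) ?_
      calc tSum (fun a => Mk c a a)
          = max (tSum fun a => tpow R c a a)
            (tSum fun a => (pairs c).sup fun ij => W ij a a) := by
            rw [show (fun a => Mk c a a)
              = fun a => max (tpow R c a a) ((pairs c).sup fun ij => W ij a a) from rfl,
              ms_tSum_max]
        _ ≤ 0 := by
            refine max_le (htrR c h1c hcn) ?_
            rw [show (tSum fun a => (pairs c).sup fun ij => W ij a a)
              = (pairs c).sup fun ij => tSum fun a => W ij a a from
                Finset.sup_comm _ _ _]
            refine Finset.sup_le fun ij hij => ?_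
            exact htrW ij (le_trans (hmemE c ij hij).2.2 hcn)
    have hfeasG : ∀ k, k < n → (tSum fun m => sneg m + mvA (tpow G k) g m) ≤ 0 := by
      intro k hkn
      have hk : k ≤ n := hkn.le
      refine le_trans (ms_tSum_mono fun m =>
        add_le_add_right (ms_mvA_mono_m g (claimB k hk) m) _) ?_
      have e0 : ∀ m, mvA (Mk k) g m
          = max (mvA (tpow R k) g m)
            (tSum fun l => ((pairs k).sup fun ij => W ij m l) + g l) := by
        intro m
        show (tSum fun l => max (tpow R k m l) ((pairs k).sup fun ij => W ij m l) + g l) = _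
        rw [show mvA (tpow R k) g m = tSum fun l => tpow R k m l + g l from rfl,
          ← ms_tSum_max]
        refine ms_tSum_congr fun l => ?_
        rw [← max_add_add_right]
      refine le_trans (le_of_eq (ms_tSum_congr fun m => by
        rw [e0 m, ← max_add_add_left])) ?_
      rw [ms_tSum_max]
      refine max_le ?_ ?_
      · refine le_trans (ms_tSum_mono fun m => add_le_add_right
          (ms_mvA_mono_m g (fun i' j' => ms_tpow_le_kstar R hkn i' j') m) _) ?_
        exact hfeas
      · refine ms_tSum_le fun m => ?_
        rw [show (fun l => ((pairs k).sup fun ij => W ij m l) + g l)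
          = fun l => (pairs k).sup fun ij => W ij m l + g l from
            funext fun l => ms_finsetSup_add _ _ _]
        rw [show (tSum fun l => (pairs k).sup fun ij => W ij m l + g l)
          = (pairs k).sup fun ij => tSum fun l => W ij m l + g l from
            Finset.sup_comm _ _ _]
        rw [ms_add_finsetSup]
        refine Finset.sup_le fun ij hij => ?_
        obtain ⟨hi, hj, hk2⟩ := hmemE k ij hij
        rw [ms_add_tSum]
        refine ms_tSum_le fun l => ?_
        have e1 : W ij m l + g l
            = tSum fun c => (tpow R ij.1 m c + tMulM q (tpow R ij.2) c l) + g l :=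
          ms_tSum_add _ _
        rw [e1, ms_add_tSum]
        refine ms_tSum_le fun c => ?_
        have e2 : (tpow R ij.1 m c + tMulM q (tpow R ij.2) c l) + g l
            = tSum fun d => (tpow R ij.1 m c + (q c d + tpow R ij.2 d l)) + g l := by
          rw [show tMulM q (tpow R ij.2) c l = tSum fun d => q c d + tpow R ij.2 d l from rfl,
            ms_add_tSum, ms_tSum_add]
        rw [e2, ms_add_tSum]
        refine ms_tSum_le fun d => ?_
        have e3 : (tpow R ij.1 m c + (q c d + tpow R ij.2 d l)) + g l
            = tSum fun e => (tpow R ij.1 m c + ((tconj θ + C e d) + tpow R ij.2 d l)) + g l := by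
          rw [show q c d = tconj θ + tSum fun e => C e d from rfl,
            ms_add_tSum, ms_tSum_add, ms_add_tSum, ms_tSum_add]
        rw [e3, ms_add_tSum]
        refine ms_tSum_le fun e => ?_
        have e4 : sneg m + ((tpow R ij.1 m c + ((tconj θ + C e d) + tpow R ij.2 d l)) + g l)
            = tconj θ + ((sneg m + tpow R ij.1 m c) + ((C e d + tpow R ij.2 d l) + g l)) := by
          abel
        rw [e4]
        refine ms_L3 ?_
        have hN1 : sneg m + tpow R ij.1 m c
            ≤ tSum fun l' => tSum fun m' => sneg m' + tpow R ij.1 m' l' :=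
          le_trans (ms_le_tSum (fun m' => sneg m' + tpow R ij.1 m' c) m)
            (ms_le_tSum (fun l' => tSum fun m' => sneg m' + tpow R ij.1 m' l') c)
        have hN2 : (C e d + tpow R ij.2 d l) + g l
            ≤ tSum fun a => tSum fun b => tMulM C (tpow R ij.2) a b + g b := by
          calc (C e d + tpow R ij.2 d l) + g l
              ≤ tMulM C (tpow R ij.2) e l + g l :=
                add_le_add_left (ms_le_tSum (fun d' => C e d' + tpow R ij.2 d' l) d) _
            _ ≤ tSum fun b => tMulM C (tpow R ij.2) e b + g b :=
                ms_le_tSum (fun b => tMulM C (tpow R ij.2) e b + g b) l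
            _ ≤ tSum fun a => tSum fun b => tMulM C (tpow R ij.2) a b + g b :=
                ms_le_tSum (fun a => tSum fun b => tMulM C (tpow R ij.2) a b + g b) e
        refine le_trans (add_le_add hN1 hN2) ?_
        refine le_trans (Finset.le_sup (f := fun ij : ℕ × ℕ =>
          (tSum fun l' => tSum fun m' => sneg m' + tpow R ij.1 m' l') +
            (tSum fun a => tSum fun b => tMulM C (tpow R ij.2) a b + g b)) ?_) htheta1
        rw [pairSet]
        simp only [Finset.mem_filter, Finset.mem_product, Finset.mem_range]
        exact ⟨⟨hi, hj⟩, by omega⟩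
    -- ### Construction of the optimal solution
    set S0 : T := tSum fun m => sneg m + tSum fun l => kstar G m l with hS0
    set ε : ℝ := min 0 (-(WithBot.unbotD 0 S0)) with hε
    set u : Fin n → T := fun l => max (g l) ((ε : ℝ) : T) with hu
    set xT : Fin n → T := mvA (kstar G) u with hxTdef
    have hGfix : ∀ i, mvA G xT i ≤ xT i := by
      intro i
      rw [hxTdef, ← ms_mvA_mul]
      exact ms_mvA_mono_m u (fun i' j' => ms_mul_kstar_le htrG i' j') i
    have hxlow : ∀ l, ((ε : ℝ) : T) ≤ xT l := by
      intro l
      rw [hxTdef]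
      calc ((ε : ℝ) : T) = 0 + ((ε : ℝ) : T) := (zero_add _).symm
        _ ≤ kstar G l l + u l := by
            refine add_le_add ?_ (le_max_right _ _)
            have h0 : tId n l l ≤ kstar G l l := ms_tId_le_kstar G hn l l
            rw [show tId n l l = 0 from if_pos rfl] at h0
            exact h0
        _ ≤ mvA (kstar G) u l := ms_le_tSum (fun j => kstar G l j + u j) l
    have hxne : ∀ l, xT l ≠ ⊥ := by
      intro l hbot
      have h1 := hxlow l
      rw [hbot, le_bot_iff] at h1
      exact WithBot.coe_ne_bot h1
    set x : Fin n → ℝ := fun l => WithBot.unbotD 0 (xT l) with hxdef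
    have hx : ∀ l, ((x l : ℝ) : T) = xT l := fun l => ms_coe_unbot' (hxne l)
    have c1 : ∀ i, tSum (fun j => B i j + xT j) ≤ xT i := by
      intro i
      refine le_trans ?_ (hGfix i)
      refine ms_tSum_mono fun j => add_le_add_left ?_ _
      refine le_trans ?_ (le_max_left (R i j) (p j))
      rw [hRij i j]
      exact le_max_left _ _
    have c2 : ∀ i, tSum (fun j => D i j + tSum fun l => C j l + xT l) ≤ xT i := by
      intro i
      have e : (tSum fun j => D i j + tSum fun l => C j l + xT l)
          = mvA (tMulM D C) xT i := (ms_mvA_mul D C xT i).symm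
      rw [e]
      refine le_trans (ms_mvA_mono_m xT (fun i' j' => ?_) i) (hGfix i)
      refine le_trans ?_ (le_max_left (R i' j') (p j'))
      rw [hRij i' j']
      exact le_max_right _ _
    have c3 : ∀ i, g i ≤ xT i := by
      intro i
      rw [hxTdef]
      calc g i ≤ u i := le_max_left _ _
        _ = mvA (tId n) u i := (ms_mvA_id u i).symm
        _ ≤ mvA (kstar G) u i := ms_mvA_mono_m u (fun i' j' => ms_tId_le_kstar G hn i' j') i
    have hsxT : ∀ m, sneg m + xT m ≤ 0 := by
      have e1 : ∀ m : Fin n, xT m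
          = max (tSum fun l => kstar G m l + g l)
            (tSum fun l => kstar G m l + ((ε : ℝ) : T)) := by
        intro m
        rw [hxTdef]
        show (tSum fun l => kstar G m l + max (g l) ((ε : ℝ) : T)) = _
        rw [← ms_tSum_max]
        exact ms_tSum_congr fun l => by rw [← max_add_add_left]
      have partA : (tSum fun m => sneg m + tSum fun l => kstar G m l + g l) ≤ 0 := by
        have e2 : ∀ m : Fin n, (sneg m + tSum fun l => kstar G m l + g l)
            = tSum fun c : Fin n => sneg m + mvA (tpow G (c : ℕ)) g m := by
          intro m
          rw [show (tSum fun l => kstar G m l + g l)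
            = tSum fun c : Fin n => mvA (tpow G (c : ℕ)) g m from ?_, ms_add_tSum]
          calc (tSum fun l => kstar G m l + g l)
              = tSum fun l => tSum fun c : Fin n => tpow G (c : ℕ) m l + g l :=
                ms_tSum_congr fun l => ms_tSum_add _ _
            _ = tSum fun c : Fin n => tSum fun l => tpow G (c : ℕ) m l + g l :=
                ms_tSum_comm _
        calc (tSum fun m => sneg m + tSum fun l => kstar G m l + g l)
            = tSum fun m => tSum fun c : Fin n => sneg m + mvA (tpow G (c : ℕ)) g m :=
              ms_tSum_congr e2
          _ = tSum fun c : Fin n => tSum fun m => sneg m + mvA (tpow G (c : ℕ)) g m :=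
              ms_tSum_comm _
          _ ≤ 0 := ms_tSum_le fun c => hfeasG (c : ℕ) c.isLt
      have partB : (tSum fun m => sneg m + tSum fun l => kstar G m l + ((ε : ℝ) : T)) ≤ 0 := by
        have hS0e : S0 + ((ε : ℝ) : T) ≤ 0 := by
          by_cases hbS : S0 = ⊥
          · rw [hbS, WithBot.bot_add]; exact bot_le
          · obtain ⟨r, hr⟩ := WithBot.ne_bot_iff_exists.mp hbS
            have hre : ε ≤ -r := by
              rw [hε, ← hr]
              simp [min_le_right (0 : ℝ) (-r)]
            rw [← hr, ← WithBot.coe_add, ← WithBot.coe_zero, WithBot.coe_le_coe]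
            linarith
        have e3 : (tSum fun m => sneg m + tSum fun l => kstar G m l + ((ε : ℝ) : T))
            = S0 + ((ε : ℝ) : T) := by
          rw [hS0, ms_tSum_add]
          refine ms_tSum_congr fun m => ?_
          rw [add_assoc, ms_tSum_add]
        rw [e3]
        exact hS0e
      have main : (tSum fun m => sneg m + xT m) ≤ 0 := by
        calc (tSum fun m => sneg m + xT m)
            = tSum fun m => max (sneg m + tSum fun l => kstar G m l + g l)
                (sneg m + tSum fun l => kstar G m l + ((ε : ℝ) : T)) :=
              ms_tSum_congr fun m => by rw [e1 m, ← max_add_add_left]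
          _ = max (tSum fun m => sneg m + tSum fun l => kstar G m l + g l)
                (tSum fun m => sneg m + tSum fun l => kstar G m l + ((ε : ℝ) : T)) :=
              ms_tSum_max _ _
          _ ≤ 0 := max_le partA partB
      intro m
      exact le_trans (ms_le_tSum (fun m' => sneg m' + xT m') m) main
    have c4 : ∀ i, x i ≤ h i := by
      intro i
      have h1 : ((-(h i) : ℝ) : T) + xT i ≤ 0 := by
        refine le_trans (add_le_add_left ?_ _) (hsxT i)
        rw [hsnegj i]
        exact le_max_right _ _
      rw [← hx i] at h1
      exact WithBot.coe_le_coe.mp (ms_L5 h1)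
    have c5 : ∀ i, tSum (fun j => C i j + xT j) ≤ ((f i : ℝ) : T) := by
      intro i
      refine ms_tSum_le fun j => ?_
      have hs1 : ((-(f i) : ℝ) : T) + C i j ≤ sneg j := by
        rw [hsnegj j]
        exact le_trans (ms_le_tSum (fun i' => ((-(f i') : ℝ) : T) + C i' j) i)
          (le_max_left _ _)
      have h1 : (((-(f i) : ℝ) : T) + C i j) + xT j ≤ 0 :=
        le_trans (add_le_add_left hs1 _) (hsxT j)
      rw [add_assoc] at h1
      exact ms_L5 h1
    set CxN : T := tSum fun i => tSum fun j => C i j + xT j with hCxN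
    have hqx : ∀ i, tconj θ + CxN ≤ xT i := by
      intro i
      have e5 : tconj θ + CxN = mvA q xT i := by
        rw [hCxN]
        calc tconj θ + (tSum fun i' => tSum fun j => C i' j + xT j)
            = tconj θ + (tSum fun j => tSum fun i' => C i' j + xT j) := by
              rw [ms_tSum_comm]
          _ = tconj θ + (tSum fun j => (tSum fun i' => C i' j) + xT j) := by
              rw [ms_tSum_congr (fun j => (ms_tSum_add (fun i' => C i' j) (xT j)).symm)]
          _ = tSum fun j => tconj θ + ((tSum fun i' => C i' j) + xT j) := ms_add_tSum _ _
          _ = tSum fun j => (tconj θ + tSum fun i' => C i' j) + xT j :=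
              ms_tSum_congr fun j => (add_assoc _ _ _).symm
          _ = mvA q xT i := rfl
      rw [e5]
      refine le_trans (ms_mvA_mono_m xT (fun i' j' => ?_) i) (hGfix i)
      exact le_max_right (R i' j') (p j')
    have hvle : CxN + (tSum fun i => ((-(x i) : ℝ) : T)) ≤ θ := by
      rw [ms_add_tSum]
      refine ms_tSum_le fun i => ?_
      have h1 : tconj θ + CxN ≤ ((x i : ℝ) : T) := by
        rw [hx i]; exact hqx i
      exact ms_L4 hθbot h1
    have c1' : ∀ i, tSum (fun j => B i j + ((x j : ℝ) : T)) ≤ ((x i : ℝ) : T) := by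
      intro i; simp only [hx]; exact c1 i
    have c2' : ∀ i, tSum (fun j => D i j + tSum fun l => C j l + ((x l : ℝ) : T))
        ≤ ((x i : ℝ) : T) := by
      intro i; simp only [hx]; exact c2 i
    have c3' : ∀ i, g i ≤ ((x i : ℝ) : T) := by
      intro i; simp only [hx]; exact c3 i
    have c5' : ∀ i, tSum (fun j => C i j + ((x j : ℝ) : T)) ≤ ((f i : ℝ) : T) := by
      intro i; simp only [hx]; exact c5 i
    have e6 : (tSum fun i => tSum fun j => C i j + ((x j : ℝ) : T)) = CxN := by
      rw [hCxN]
      exact ms_tSum_congr fun i => ms_tSum_congr fun j => by rw [hx j]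
    refine ⟨x, c1', c2', c3', c4, c5', ?_⟩
    refine le_antisymm ?_ ?_
    · rw [e6]; exact hvle
    · exact lowb x c1' c2' c3' c4 c5'
  · rintro v ⟨x, h1, h2, h3, h4, h5, rfl⟩
    exact lowb x h1 h2 h3 h4 h5
end
end
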